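/- Let n ≥ 1 and let A and B be symmetric (n+1)×(n+1) complex matrices with p(t) = det(A + tB) not identically zero, and let t₀ ∈ ℂ be such that Q = A + t₀B is singular. Then the order of vanishing of p at t₀ is at least 2 if and only if either rank(Q) < n, or rank(Q) = n and the vector v spanning ker(Q) satisfies vᵀBv = 0 (i.e. the unique singular point [v] of Q is a base point of the pencil, lying on every member αA + βB). -/

import Mathlib

open Matrix Polynomial

section AuxLemmas

lemma det_updateRow_eq {m : ℕ} (Q : Matrix (Fin m) (Fin m) ℂ) (i : Fin m) (b : Fin m → ℂ) :
    (Q.updateRow i b).det = ∑ j, adjugate Q j i * b j := by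
  have h1 : (Q.updateRow i b)ᵀ = Qᵀ.updateCol i b := updateCol_transpose.symm
  rw [← det_transpose, h1, ← cramer_apply, cramer_eq_adjugate_mulVec]
  simp [mulVec, dotProduct, ← adjugate_transpose, transpose_apply]

lemma sum_det_updateRow_eq_trace {m : ℕ} (Q B : Matrix (Fin m) (Fin m) ℂ) :
    ∑ i, (Q.updateRow i (B i)).det = trace (adjugate Q * B) := by
  simp only [det_updateRow_eq, trace, diag, mul_apply]
  rw [Finset.sum_comm]


lemma det_expand {m : ℕ} (Q B : Matrix (Fin m) (Fin m) ℂ) :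
    (Q.map C + (X : ℂ[X]) • B.map C).det =
      ∑ s : Finset (Fin m), X ^ s.card * C ((Matrix.of (s.piecewise B Q)).det) := by
  let f := (detRowAlternating : (Fin m → ℂ[X]) [⋀^Fin m]→ₗ[ℂ[X]] ℂ[X]).toMultilinearMap
  have key : (Q.map C + (X : ℂ[X]) • B.map C).det
      = f ((fun i => ((X : ℂ[X]) • B.map C) i) + (fun i => (Q.map C) i)) := by
    congr 1
    ext i j
    simp [Matrix.add_apply, add_comm]
  rw [key, MultilinearMap.map_add_univ]
  refine Finset.sum_congr rfl fun s _ => ?_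
  have h1 : s.piecewise (fun i => ((X : ℂ[X]) • B.map C) i) (fun i => (Q.map C) i)
      = s.piecewise (fun i => (X : ℂ[X]) • (s.piecewise (fun i => (B.map C) i) (fun i => (Q.map C) i)) i)
          (s.piecewise (fun i => (B.map C) i) (fun i => (Q.map C) i)) := by
    funext i
    by_cases h : i ∈ s <;> funext j <;> simp [Finset.piecewise, h]
  rw [h1, f.map_piecewise_smul]
  have hmat : (s.piecewise (fun i => (B.map C) i) (fun i => (Q.map C) i))
      = ((Matrix.of (s.piecewise B Q)).map C) := by
    funext i j
    by_cases h : i ∈ s <;> simp [Finset.piecewise, h, Matrix.map_apply]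
  rw [hmat]
  have h2 : f ((Matrix.of (s.piecewise B Q)).map C) = ((Matrix.of (s.piecewise B Q)).map C).det := rfl
  rw [h2, ← RingHom.mapMatrix_apply, ← RingHom.map_det]
  simp [smul_eq_mul, Finset.prod_const]

lemma coeff_one_det {m : ℕ} (Q B : Matrix (Fin m) (Fin m) ℂ) :
    ((Q.map C + (X : ℂ[X]) • B.map C).det).coeff 1 = ∑ i, (Q.updateRow i (B i)).det := by
  rw [det_expand, finset_sum_coeff]
  have hterm : ∀ s : Finset (Fin m),
      (X ^ s.card * C ((Matrix.of (s.piecewise B Q)).det)).coeff 1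
        = if 1 = s.card then (Matrix.of (s.piecewise B Q)).det else 0 := by
    intro s
    rw [mul_comm, coeff_C_mul, coeff_X_pow]
    split <;> simp
  simp only [hterm]
  rw [← Finset.sum_filter]
  have himg : Finset.univ.filter (fun s : Finset (Fin m) => 1 = s.card)
      = Finset.univ.image (fun i : Fin m => ({i} : Finset (Fin m))) := by
    ext s
    simp [eq_comm, Finset.card_eq_one]
  rw [himg, Finset.sum_image (by intro a _ b _ h; exact Finset.singleton_injective h)]
  refine Finset.sum_congr rfl fun i _ => ?_
  congr 1
  funext k j
  by_cases h : k = i <;> simp [Finset.piecewise, h, Matrix.updateRow_apply]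

lemma adjugate_eq_zero_of_two_le {m : ℕ} (Q : Matrix (Fin m) (Fin m) ℂ)
    (h2 : 2 ≤ Module.finrank ℂ (LinearMap.ker Q.mulVecLin)) : adjugate Q = 0 := by
  ext i j
  rw [adjugate_apply, Matrix.zero_apply]
  set K := LinearMap.ker Q.mulVecLin with hK
  let f : K →ₗ[ℂ] ℂ := (LinearMap.proj i).comp K.subtype
  have hker : LinearMap.ker f ≠ ⊥ := by
    intro hbot
    have hinj : Function.Injective f := LinearMap.ker_eq_bot.mp hbot
    have hle := LinearMap.finrank_le_finrank_of_injective hinj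
    rw [Module.finrank_self] at hle
    omega
  obtain ⟨x, hx, hx0⟩ := (Submodule.ne_bot_iff _).mp hker
  refine (Matrix.exists_mulVec_eq_zero_iff).mp ⟨(x : Fin m → ℂ), ?_, ?_⟩
  · simpa [Submodule.coe_eq_zero] using hx0
  · funext k
    by_cases hk : k = j
    · subst hk
      have hxi : (x : Fin m → ℂ) i = 0 := hx
      simp [Matrix.mulVec, Matrix.updateRow_self, single_dotProduct, hxi]
    · have hxK : Q *ᵥ (x : Fin m → ℂ) = 0 := x.2
      simp only [Matrix.mulVec, Matrix.updateRow_ne hk]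
      have := congrFun hxK k
      simpa [Matrix.mulVec] using this

lemma updateColumn_mulVec {m : ℕ} (Q : Matrix (Fin m) (Fin m) ℂ) (j : Fin m)
    (u x : Fin m → ℂ) :
    (Q.updateCol j u) *ᵥ x = Q *ᵥ (Function.update x j 0) + x j • u := by
  funext k
  simp only [Matrix.mulVec, dotProduct, Pi.add_apply, Pi.smul_apply, smul_eq_mul]
  rw [← Finset.sum_erase_add _ _ (Finset.mem_univ j),
      ← Finset.sum_erase_add _ (fun l => Q k l * Function.update x j 0 l) (Finset.mem_univ j)]
  simp only [Matrix.updateCol_self, Function.update_self]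
  rw [Finset.sum_congr rfl fun l hl => ?_]
  · ring
  · have hlj : l ≠ j := Finset.ne_of_mem_erase hl
    rw [Matrix.updateCol_ne hlj, Function.update_of_ne hlj]

lemma adjugate_ne_zero_of_span {m : ℕ} (Q : Matrix (Fin m) (Fin m) ℂ)
    (hrange : LinearMap.range Q.mulVecLin ≠ ⊤)
    (v : Fin m → ℂ) (hv0 : v ≠ 0)
    (hspan : ∀ x : Fin m → ℂ, Q *ᵥ x = 0 → ∃ a : ℂ, x = a • v) :
    adjugate Q ≠ 0 := by
  obtain ⟨u, hu⟩ : ∃ u : Fin m → ℂ, u ∉ LinearMap.range Q.mulVecLin := by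
    by_contra h
    push_neg at h
    exact hrange (Submodule.eq_top_iff'.mpr h)
  obtain ⟨j, hvj⟩ : ∃ j, v j ≠ 0 := by
    by_contra h
    push_neg at h
    exact hv0 (funext h)
  have hdet : (Q.updateCol j u).det ≠ 0 := by
    intro hdet0
    obtain ⟨x, hx0, hx⟩ := (Matrix.exists_mulVec_eq_zero_iff).mpr hdet0
    rw [updateColumn_mulVec] at hx
    have hxj : x j = 0 := by
      by_contra hxj
      apply hu
      have : u = (x j)⁻¹ • -(Q *ᵥ Function.update x j 0) := by
        have h' : x j • u = -(Q *ᵥ Function.update x j 0) := by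
          rw [eq_neg_iff_add_eq_zero, add_comm]; exact hx
        rw [← h', smul_smul, inv_mul_cancel₀ hxj, one_smul]
      rw [this]
      exact Submodule.smul_mem _ _ (Submodule.neg_mem _ ⟨Function.update x j 0, rfl⟩)
    have hxq : Q *ᵥ x = 0 := by
      have hux : Function.update x j 0 = x := by
        funext l
        rcases eq_or_ne l j with rfl | hl
        · simp [hxj]
        · simp [Function.update_of_ne hl]
      rw [hxj, zero_smul, add_zero, hux] at hx
      exact hx
    obtain ⟨a, rfl⟩ := hspan x hxq
    have : a = 0 := by
      have := congrFun (rfl : a • v = a • v) j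
      have hxj' : a * v j = 0 := hxj
      exact (mul_eq_zero.mp hxj').resolve_right hvj
    exact hx0 (by rw [this, zero_smul])
  intro hadj
  apply hdet
  have : (Q.updateCol j u).det = (adjugate Q *ᵥ u) j := by
    rw [← cramer_apply, cramer_eq_adjugate_mulVec]
  rw [this, hadj]
  simp


lemma adjugate_structure {m : ℕ} (Q : Matrix (Fin m) (Fin m) ℂ)
    (hQsym : Qᵀ = Q) (hdet : Q.det = 0)
    (v : Fin m → ℂ) (hv0 : v ≠ 0)
    (hspan : ∀ x : Fin m → ℂ, Q *ᵥ x = 0 → ∃ a : ℂ, x = a • v)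
    (hNne : adjugate Q ≠ 0) :
    ∃ lam : ℂ, lam ≠ 0 ∧ ∀ i j, adjugate Q i j = lam * v i * v j := by
  set N := adjugate Q with hNdef
  have hQN : Q * N = 0 := by rw [hNdef, mul_adjugate, hdet, zero_smul]
  have hcols : ∀ j, ∃ c : ℂ, (fun i => N i j) = c • v := by
    intro j
    apply hspan
    funext k
    have := congrFun (congrFun hQN k) j
    simpa [Matrix.mul_apply, Matrix.mulVec, dotProduct] using this
  choose c hc using hcols
  have hcv : ∀ j i, N i j = c j * v i := by
    intro j i
    have := congrFun (hc j) i
    simpa using this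
  have hsym : ∀ i j, N i j = N j i := by
    have hNT : Nᵀ = N := by rw [hNdef, adjugate_transpose, hQsym]
    intro i j
    have := congrFun (congrFun hNT j) i
    simpa [Matrix.transpose_apply] using this
  obtain ⟨i₀, hvi₀⟩ : ∃ i₀, v i₀ ≠ 0 := by
    by_contra h
    push_neg at h
    exact hv0 (funext h)
  have h3 : ∀ j, c j * v i₀ = c i₀ * v j := by
    intro j
    rw [← hcv j i₀, hsym i₀ j, hcv i₀ j]
  refine ⟨c i₀ / v i₀, ?_, ?_⟩
  · intro hlam
    apply hNne
    ext i j
    have hcj : c j = 0 := by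
      have : c j = c i₀ / v i₀ * v j := by field_simp; linear_combination h3 j
      rw [this, hlam, zero_mul]
    simp [hcv j i, hcj]
  · intro i j
    rw [hcv j i]
    field_simp
    linear_combination v i * h3 j

lemma trace_outer_mul {m : ℕ} (B : Matrix (Fin m) (Fin m) ℂ)
    (N : Matrix (Fin m) (Fin m) ℂ) (lam : ℂ) (v : Fin m → ℂ)
    (hN : ∀ i j, N i j = lam * v i * v j) :
    trace (N * B) = lam * (v ⬝ᵥ B *ᵥ v) := by
  simp only [trace, diag, Matrix.mul_apply, dotProduct, Matrix.mulVec, Finset.mul_sum]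
  rw [Finset.sum_comm]
  refine Finset.sum_congr rfl fun k _ => Finset.sum_congr rfl fun i _ => ?_
  rw [hN i k]
  ring


lemma eval_det_pencil {m : ℕ} (A B : Matrix (Fin m) (Fin m) ℂ) (t₀ : ℂ) :
    ((A.map C + (X : ℂ[X]) • B.map C).det).eval t₀ = (A + t₀ • B).det := by
  have h := RingHom.map_det (evalRingHom t₀) (A.map C + (X : ℂ[X]) • B.map C)
  rw [coe_evalRingHom] at h
  rw [h, RingHom.mapMatrix_apply]
  congr 1
  ext i j
  simp only [Matrix.map_apply, Matrix.add_apply, Matrix.smul_apply, smul_eq_mul,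
    coe_evalRingHom, eval_add, eval_mul, eval_C, eval_X]

lemma taylor_det_pencil {m : ℕ} (A B : Matrix (Fin m) (Fin m) ℂ) (t₀ : ℂ) :
    taylor t₀ ((A.map C + (X : ℂ[X]) • B.map C).det)
      = ((A + t₀ • B).map C + (X : ℂ[X]) • B.map C).det := by
  have hcomp : taylor t₀ ((A.map C + (X : ℂ[X]) • B.map C).det)
      = (eval₂RingHom C (X + C t₀)) ((A.map C + (X : ℂ[X]) • B.map C).det) := by
    rw [taylor_apply]; rfl
  rw [hcomp, RingHom.map_det, RingHom.mapMatrix_apply]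
  congr 1
  funext i j
  simp only [Matrix.map_apply, Matrix.add_apply, Matrix.smul_apply, smul_eq_mul,
    coe_eval₂RingHom, eval₂_add, eval₂_mul, eval₂_C, eval₂_X, C_add, C_mul]
  ring

end AuxLemmas

/-- Let `n ≥ 1`, `A`, `B` symmetric `(n+1)×(n+1)` complex matrices with
`p(t) = det(A + tB)` not identically zero, and `t₀ ∈ ℂ` with `Q = A + t₀B` singular.
Then `p` vanishes to order at least `2` at `t₀` iff either `rank Q < n`, or `rank Q = n`
and every vector `v` in the kernel of `Q` satisfies `vᵀBv = 0` (i.e. the unique singular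
point of `Q` is a base point of the pencil). -/
theorem multiplicity_ge_two_iff (n : ℕ) (hn : 1 ≤ n)
    (A B : Matrix (Fin (n + 1)) (Fin (n + 1)) ℂ)
    (hA : A.IsSymm) (hB : B.IsSymm)
    (p : Polynomial ℂ)
    (hp : p = (A.map Polynomial.C + (Polynomial.X : Polynomial ℂ) • B.map Polynomial.C).det)
    (hpne : p ≠ 0) (t₀ : ℂ)
    (hsing : (A + t₀ • B).det = 0) :
    2 ≤ p.rootMultiplicity t₀ ↔
      ((A + t₀ • B).rank < n ∨
        ((A + t₀ • B).rank = n ∧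
          ∀ v : Fin (n + 1) → ℂ, (A + t₀ • B).mulVec v = 0 → v ⬝ᵥ B.mulVec v = 0)) := by
  set Q := A + t₀ • B with hQdef
  have hQsym : Qᵀ = Q := by
    rw [hQdef, transpose_add, transpose_smul, hA.eq, hB.eq]
  have hd1 : (derivative p).eval t₀ = trace (adjugate Q * B) := by
    rw [← taylor_coeff_one, hp, taylor_det_pencil A B t₀, coeff_one_det,
      sum_det_updateRow_eq_trace, ← hQdef]
  have hd0 : p.eval t₀ = 0 := by rw [hp, eval_det_pencil, ← hQdef]; exact hsing
  have hmult : 2 ≤ p.rootMultiplicity t₀ ↔ trace (adjugate Q * B) = 0 := by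
    have h2lt : 2 ≤ p.rootMultiplicity t₀ ↔ 1 < p.rootMultiplicity t₀ := by omega
    rw [h2lt,
      lt_rootMultiplicity_iff_isRoot_iterate_derivative_of_mem_nonZeroDivisors hpne
        (by simpa [Nat.factorial] using Submonoid.one_mem (nonZeroDivisors ℂ))]
    constructor
    · intro h
      have := h 1 le_rfl
      rw [Function.iterate_one] at this
      rw [← hd1]; exact this
    · intro h k hk
      interval_cases k
      · simpa [Polynomial.IsRoot] using hd0
      · simp only [Function.iterate_one, Polynomial.IsRoot]
        rw [hd1]; exact h
  rw [hmult]
  have hranksum : Q.rank + Module.finrank ℂ (LinearMap.ker Q.mulVecLin) = n + 1 := by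
    have h := LinearMap.finrank_range_add_finrank_ker Q.mulVecLin
    rw [Module.finrank_fintype_fun_eq_card, Fintype.card_fin] at h
    simpa [Matrix.rank] using h
  obtain ⟨v, hv0, hvker⟩ := (Matrix.exists_mulVec_eq_zero_iff).mpr hsing
  have hvK : v ∈ LinearMap.ker Q.mulVecLin := by
    rw [LinearMap.mem_ker, Matrix.mulVecLin_apply]; exact hvker
  have hker_pos : 1 ≤ Module.finrank ℂ (LinearMap.ker Q.mulVecLin) := by
    by_contra h
    push_neg at h
    have h0 : Module.finrank ℂ (LinearMap.ker Q.mulVecLin) = 0 := by omega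
    rw [Submodule.finrank_eq_zero] at h0
    rw [h0] at hvK
    exact hv0 (by simpa using hvK)
  have hrank_le : Q.rank ≤ n := by omega
  rcases lt_or_eq_of_le hrank_le with hlt | heq
  · have h2 : 2 ≤ Module.finrank ℂ (LinearMap.ker Q.mulVecLin) := by omega
    have hadj : adjugate Q = 0 := adjugate_eq_zero_of_two_le Q h2
    simp [hadj, hlt]
  · have hker1 : Module.finrank ℂ (LinearMap.ker Q.mulVecLin) = 1 := by omega
    have hspan : ∀ x : Fin (n + 1) → ℂ, Q *ᵥ x = 0 → ∃ a : ℂ, x = a • v := by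
      intro x hx
      have hxK : x ∈ LinearMap.ker Q.mulVecLin := by
        rw [LinearMap.mem_ker, Matrix.mulVecLin_apply]; exact hx
      have hspan_eq : (ℂ ∙ v) = LinearMap.ker Q.mulVecLin := by
        apply Submodule.eq_of_le_of_finrank_le (Submodule.span_le.mpr (by simpa using hvK))
        rw [hker1, finrank_span_singleton hv0]
      rw [← hspan_eq] at hxK
      obtain ⟨a, ha⟩ := Submodule.mem_span_singleton.mp hxK
      exact ⟨a, ha.symm⟩
    have hrange_ne : LinearMap.range Q.mulVecLin ≠ ⊤ := by
      intro htop
      have : Q.rank = n + 1 := by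
        rw [Matrix.rank, htop, finrank_top, Module.finrank_fintype_fun_eq_card, Fintype.card_fin]
      omega
    have hNne := adjugate_ne_zero_of_span Q hrange_ne v hv0 hspan
    obtain ⟨lam, hlam, hN⟩ := adjugate_structure Q hQsym hsing v hv0 hspan hNne
    rw [trace_outer_mul B _ lam v hN]
    have hlt' : ¬ Q.rank < n := by omega
    simp only [hlt', false_or]
    constructor
    · intro h
      refine ⟨heq, ?_⟩
      intro w hw
      obtain ⟨a, rfl⟩ := hspan w hw
      have hv : v ⬝ᵥ B *ᵥ v = 0 := (mul_eq_zero.mp h).resolve_left hlam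
      rw [Matrix.mulVec_smul, smul_dotProduct, dotProduct_smul, hv]
      simp
    · rintro ⟨-, hall⟩
      rw [hall v hvker, mul_zero]
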